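/- Let E be a finite collection of measurable sets with 0 < μ(sh(E)) < ∞ and suppose the restricted weak-type bound μ({M_E(1_B) > η}) ≤ M μ(B) holds for all measurable B, with η ∈ (0,1), M ≥ 1. Then there exists a total order ≺ on E such that for every R ∈ E, μ({x ∈ R : h_{E_{⪰R}}(x) ≤ 2M‖E‖_{Carleson(μ)}}) ≥ (1−η) μ(R), and consequently ‖E‖_{Sparse(μ)} ≥ (1−η)/(2M‖E‖_{Carleson(μ)}). -/

import Mathlib

open MeasureTheory Set
open scoped ENNReal Classical

private lemma stmt17_select {X : Type*} [MeasurableSpace X] (μ : Measure X)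
    {ι : Type*} {s T : Finset ι} {E : ι → Set X}
    (hmeas : ∀ i ∈ s, MeasurableSet (E i))
    (hfin : ∀ i ∈ s, μ (E i) < ⊤)
    {η M c : ℝ≥0∞} (hη1 : η < 1) (hM0 : M ≠ 0) (hMfin : M < ⊤)
    (hc0 : c ≠ 0) (hcfin : c < ⊤)
    (hmax : ∀ B : Set X, MeasurableSet B →
      μ {x | η < ⨆ i ∈ s, (E i).indicator (fun _ => μ (B ∩ E i) / μ (E i)) x} ≤ M * μ B)
    (hTs : T ⊆ s) (hTne : T.Nonempty) (hTpos : ∀ i ∈ T, 0 < μ (E i))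
    (hcar : ∑ j ∈ T, μ (E j) ≤ c * μ (⋃ j ∈ T, E j)) :
    ∃ i ∈ T, (1 - η) * μ (E i) ≤
      μ {x ∈ E i | (∑ j ∈ T, (E j).indicator (1 : X → ℝ≥0∞) x) ≤ 2 * M * c} := by
  classical
  set f : X → ℝ≥0∞ := fun x => ∑ j ∈ T, (E j).indicator (1 : X → ℝ≥0∞) x with hf
  have hfmeas : Measurable f := by
    apply Finset.measurable_sum
    intro j hj
    exact measurable_const.indicator (hmeas j (hTs hj))
  set B : Set X := {x | 2 * M * c < f x} with hBdef
  have hB : MeasurableSet B := measurableSet_lt measurable_const hfmeas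
  have hint : ∫⁻ x, f x ∂μ = ∑ j ∈ T, μ (E j) := by
    simp only [hf]
    rw [lintegral_finset_sum T (f := fun j => (E j).indicator (1 : X → ℝ≥0∞))
      (fun j hj => measurable_const.indicator (hmeas j (hTs hj)))]
    exact Finset.sum_congr rfl fun j hj => lintegral_indicator_one (hmeas j (hTs hj))
  have hsumfin : (∑ j ∈ T, μ (E j)) < ⊤ :=
    ENNReal.sum_lt_top.2 fun j hj => hfin j (hTs hj)
  have hUfin : μ (⋃ j ∈ T, E j) < ⊤ := by
    refine lt_of_le_of_lt (measure_biUnion_finset_le _ _) hsumfin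
  have hUpos : 0 < μ (⋃ j ∈ T, E j) := by
    obtain ⟨i, hi⟩ := hTne
    refine lt_of_lt_of_le (hTpos i hi) (measure_mono ?_)
    exact subset_biUnion_of_mem hi
  -- Markov
  have hmarkov : 2 * M * c * μ B ≤ ∑ j ∈ T, μ (E j) := by
    rw [← hint]
    refine le_trans (mul_le_mul_right (measure_mono ?_) _) (mul_meas_ge_le_lintegral₀ hfmeas.aemeasurable _)
    intro x hx
    simp only [hBdef, Set.mem_setOf_eq] at hx ⊢
    exact hx.le
  have hBle : 2 * (M * μ B) ≤ μ (⋃ j ∈ T, E j) := by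
    have h1 : c * (2 * (M * μ B)) ≤ c * μ (⋃ j ∈ T, E j) := by
      refine le_trans (le_of_eq ?_) (le_trans hmarkov hcar)
      ring
    exact (ENNReal.mul_le_mul_iff_right hc0 hcfin.ne).1 h1
  have hBfin : μ B < ⊤ := by
    by_contra h
    rw [not_lt, top_le_iff] at h
    have h2 : (2 * M * c) * μ B = ⊤ := by
      rw [h, ENNReal.mul_top]
      refine mul_ne_zero (mul_ne_zero (by norm_num) hM0) hc0
    rw [h2] at hmarkov
    exact absurd (top_le_iff.1 hmarkov) hsumfin.ne
  by_contra hcon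
  push_neg at hcon
  -- for each i ∈ T, η μ(E i) < μ (B ∩ E i)
  have key : ∀ i ∈ T, η * μ (E i) < μ (B ∩ E i) := by
    intro i hi
    have hset : {x ∈ E i | f x ≤ 2 * M * c} = E i \ B := by
      ext x
      simp only [Set.mem_setOf_eq, Set.mem_diff, hBdef, not_lt]
    have h1 : μ (E i \ B) < (1 - η) * μ (E i) := by
      rw [← hset]; exact hcon i hi
    have h2 : μ (E i) ≤ μ (E i \ B) + μ (B ∩ E i) := by
      refine le_trans (measure_mono ?_) (measure_union_le _ _)
      intro x hx
      by_cases hxB : x ∈ B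
      · exact Or.inr ⟨hxB, hx⟩
      · exact Or.inl ⟨hx, hxB⟩
    have hsplit : η * μ (E i) + (1 - η) * μ (E i) = μ (E i) := by
      rw [← add_mul, add_tsub_cancel_of_le hη1.le, one_mul]
    have h3 : η * μ (E i) + (1 - η) * μ (E i) < (1 - η) * μ (E i) + μ (B ∩ E i) := by
      rw [hsplit]
      calc μ (E i) ≤ μ (E i \ B) + μ (B ∩ E i) := h2
        _ < (1 - η) * μ (E i) + μ (B ∩ E i) := by
            refine ENNReal.add_lt_add_right ?_ h1
            exact (lt_of_le_of_lt (measure_mono Set.inter_subset_right) (hfin i (hTs hi))).ne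
    have hfin' : (1 - η) * μ (E i) ≠ ⊤ :=
      (ENNReal.mul_lt_top (lt_of_le_of_lt tsub_le_self ENNReal.one_lt_top) (hfin i (hTs hi))).ne
    rw [add_comm (η * μ (E i))] at h3
    exact (ENNReal.add_lt_add_iff_left hfin').1 h3
  -- shadow contained in bad set
  have hsub : (⋃ j ∈ T, E j) ⊆
      {x | η < ⨆ i ∈ s, (E i).indicator (fun _ => μ (B ∩ E i) / μ (E i)) x} := by
    intro x hx
    obtain ⟨i, hi, hxi⟩ := Set.mem_iUnion₂.1 hx
    have hlt : η < μ (B ∩ E i) / μ (E i) := by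
      rw [ENNReal.lt_div_iff_mul_lt (Or.inl (hTpos i hi).ne') (Or.inl (hfin i (hTs hi)).ne)]
      exact key i hi
    refine lt_of_lt_of_le hlt ?_
    have := le_iSup₂ (f := fun i (_ : i ∈ s) => (E i).indicator (fun _ => μ (B ∩ E i) / μ (E i)) x)
      i (hTs hi)
    refine le_trans ?_ this
    rw [Set.indicator_of_mem hxi]
  have hfinal : μ (⋃ j ∈ T, E j) ≤ M * μ B :=
    le_trans (measure_mono hsub) (hmax B hB)
  have h2t : 2 * (M * μ B) ≤ M * μ B := le_trans hBle hfinal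
  have hMBfin : M * μ B < ⊤ := ENNReal.mul_lt_top hMfin hBfin
  have hMBpos : 0 < M * μ B := lt_of_lt_of_le hUpos hfinal
  have : (2 : ℝ≥0∞) * (M * μ B) ≤ 1 * (M * μ B) := by rw [one_mul]; exact h2t
  have h21 : (2 : ℝ≥0∞) ≤ 1 := by
    exact (ENNReal.mul_le_mul_iff_left hMBpos.ne' hMBfin.ne).1 this
  norm_num at h21

private lemma stmt17_greedy {X : Type*} [MeasurableSpace X] (μ : Measure X)
    {ι : Type*} {s : Finset ι} {E : ι → Set X}
    (hmeas : ∀ i ∈ s, MeasurableSet (E i))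
    (hpos : ∀ i ∈ s, 0 < μ (E i)) (hfin : ∀ i ∈ s, μ (E i) < ⊤)
    {η M c : ℝ≥0∞} (hη1 : η < 1) (hM0 : M ≠ 0) (hMfin : M < ⊤)
    (hc0 : c ≠ 0) (hcfin : c < ⊤)
    (hmax : ∀ B : Set X, MeasurableSet B →
      μ {x | η < ⨆ i ∈ s, (E i).indicator (fun _ => μ (B ∩ E i) / μ (E i)) x} ≤ M * μ B)
    (hcar : ∀ T : Finset ι, T ⊆ s → T.Nonempty →
      ∑ j ∈ T, μ (E j) ≤ c * μ (⋃ j ∈ T, E j)) :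
    ∀ n (T : Finset ι), T.card = n → T ⊆ s →
    ∃ f : ι → ℕ, Set.InjOn f T ∧ ∀ i ∈ T, (1 - η) * μ (E i) ≤
      μ {x ∈ E i | (∑ j ∈ T.filter (fun j => f i ≤ f j), (E j).indicator (1 : X → ℝ≥0∞) x)
          ≤ 2 * M * c} := by
  classical
  intro n
  induction n with
  | zero =>
    intro T hcard hTs
    refine ⟨fun _ => 0, ?_, ?_⟩
    · rw [Finset.card_eq_zero.1 hcard]; simp [Set.InjOn]
    · rw [Finset.card_eq_zero.1 hcard]; simp
  | succ n ih =>
    intro T hcard hTs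
    have hTne : T.Nonempty := Finset.card_pos.1 (by omega)
    obtain ⟨i, hiT, hib⟩ := stmt17_select μ hmeas hfin hη1 hM0 hMfin hc0 hcfin hmax hTs hTne
      (fun j hj => hpos j (hTs hj)) (hcar T hTs hTne)
    set T' := T.erase i with hT'
    obtain ⟨g, hginj, hgb⟩ := ih T' (by simp [hT', Finset.card_erase_of_mem hiT, hcard]) 
      (fun j hj => hTs (Finset.erase_subset _ _ hj))
    refine ⟨fun j => if j = i then 0 else g j + 1, ?_, ?_⟩
    · intro a ha b hb hab
      simp only at hab
      by_cases hai : a = i <;> by_cases hbi : b = i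
      · rw [hai, hbi]
      · simp [hai, hbi] at hab
      · simp [hai, hbi] at hab
      · simp only [if_neg hai, if_neg hbi, add_left_inj] at hab
        exact hginj (Finset.mem_coe.2 (Finset.mem_erase.2 ⟨hai, ha⟩))
          (Finset.mem_coe.2 (Finset.mem_erase.2 ⟨hbi, hb⟩)) hab
    · intro j hjT
      by_cases hji : j = i
      · have hfil : T.filter (fun k => (if j = i then 0 else g j + 1) ≤
            (if k = i then 0 else g k + 1)) = T :=
          Finset.filter_true_of_mem fun k hk => by simp [hji]
        beta_reduce
        rw [hfil, hji]
        exact hib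
      · have hjT' : j ∈ T' := Finset.mem_erase.2 ⟨hji, hjT⟩
        have hfil : T.filter (fun k => (if j = i then 0 else g j + 1) ≤
            (if k = i then 0 else g k + 1)) = T'.filter (fun k => g j ≤ g k) := by
          ext k
          simp only [Finset.mem_filter, hT', Finset.mem_erase, if_neg hji]
          constructor
          · rintro ⟨hkT, hle⟩
            by_cases hki : k = i
            · rw [if_pos hki] at hle; omega
            · rw [if_neg hki] at hle
              exact ⟨⟨hki, hkT⟩, by omega⟩
          · rintro ⟨⟨hki, hkT⟩, hle⟩
            rw [if_neg hki]
            exact ⟨hkT, by omega⟩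
        beta_reduce
        rw [hfil]
        exact hgb j hjT'

theorem stmt17 {X : Type*} [MeasurableSpace X] (μ : Measure X)
    {ι : Type*} (s : Finset ι) (E : ι → Set X)
    (hmeas : ∀ i ∈ s, MeasurableSet (E i))
    (hpos : ∀ i ∈ s, 0 < μ (E i)) (hfin : ∀ i ∈ s, μ (E i) < ⊤)
    (hshpos : 0 < μ (⋃ i ∈ s, E i)) (hshfin : μ (⋃ i ∈ s, E i) < ⊤)
    (η M : ℝ≥0∞) (hη0 : 0 < η) (hη1 : η < 1) (hM1 : 1 ≤ M) (hMfin : M < ⊤)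
    (hmax : ∀ B : Set X, MeasurableSet B →
      μ {x | η < ⨆ i ∈ s, (E i).indicator (fun _ => μ (B ∩ E i) / μ (E i)) x} ≤ M * μ B) :
    let Car : ℝ≥0∞ := ⨆ F ∈ s.powerset, (∑ i ∈ F, μ (E i)) / μ (⋃ i ∈ F, E i)
    (∃ r : ι → ι → Prop, IsLinearOrder ι r ∧
      ∀ i ∈ s, (1 - η) * μ (E i) ≤
        μ {x ∈ E i |
            (∑ j ∈ s.filter (fun j => r i j), (E j).indicator (1 : X → ℝ≥0∞) x) ≤
              2 * M * Car}) ∧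
    (∃ φ : ι → X → ℝ≥0∞,
      (∀ i ∈ s, Measurable (φ i)) ∧
      (∀ i ∈ s, ((1 - η) / (2 * M * Car)) * μ (E i) ≤ ∫⁻ x in E i, φ i x ∂μ) ∧
      (∀ x, ∑ i ∈ s, φ i x ≤ 1)) := by
  classical
  intro Car
  have hsne : s.Nonempty := by
    rcases Finset.eq_empty_or_nonempty s with h | h
    · exfalso; rw [h] at hshpos; simp at hshpos
    · exact h
  have hM0 : M ≠ 0 := by intro h; rw [h] at hM1; exact absurd hM1 (by norm_num)
  have hCar1 : (1 : ℝ≥0∞) ≤ Car := by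
    obtain ⟨i0, hi0⟩ := hsne
    have h1 : (∑ i ∈ ({i0} : Finset ι), μ (E i)) / μ (⋃ i ∈ ({i0} : Finset ι), E i) = 1 := by
      simp [ENNReal.div_self (hpos i0 hi0).ne' (hfin i0 hi0).ne]
    rw [← h1]
    exact le_iSup₂ (f := fun (F : Finset ι) (_ : F ∈ s.powerset) =>
      (∑ i ∈ F, μ (E i)) / μ (⋃ i ∈ F, E i)) ({i0} : Finset ι)
      (Finset.mem_powerset.2 (Finset.singleton_subset_iff.2 hi0))
  have hCar0 : Car ≠ 0 := fun h => by rw [h] at hCar1; exact absurd hCar1 (by norm_num)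
  have hCarfin : Car < ⊤ := by
    have h1 : Car = (s.powerset).sup (fun F => (∑ i ∈ F, μ (E i)) / μ (⋃ i ∈ F, E i)) :=
      (Finset.sup_eq_iSup _ _).symm
    rw [h1, Finset.sup_lt_iff (by simp : (⊥ : ℝ≥0∞) < ⊤)]
    intro F hF
    rcases Finset.eq_empty_or_nonempty F with rfl | hFne
    · simp
    · obtain ⟨i, hi⟩ := hFne
      refine ENNReal.div_lt_top
        (ENNReal.sum_lt_top.2 fun j hj => hfin j (Finset.mem_powerset.1 hF hj)).ne ?_
      have h2 : 0 < μ (⋃ i ∈ F, E i) :=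
        lt_of_lt_of_le (hpos i (Finset.mem_powerset.1 hF hi))
          (measure_mono (subset_biUnion_of_mem hi))
      exact h2.ne'
  have hD0 : (2 * M * Car : ℝ≥0∞) ≠ 0 :=
    mul_ne_zero (mul_ne_zero two_ne_zero hM0) hCar0
  have hDfin : (2 * M * Car : ℝ≥0∞) < ⊤ :=
    ENNReal.mul_lt_top (ENNReal.mul_lt_top (by norm_num) hMfin) hCarfin
  have hcar : ∀ T : Finset ι, T ⊆ s → T.Nonempty →
      ∑ j ∈ T, μ (E j) ≤ Car * μ (⋃ j ∈ T, E j) := by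
    intro T hTs hTne
    have hle : (∑ j ∈ T, μ (E j)) / μ (⋃ j ∈ T, E j) ≤ Car :=
      le_iSup₂ (f := fun (F : Finset ι) (_ : F ∈ s.powerset) =>
        (∑ i ∈ F, μ (E i)) / μ (⋃ i ∈ F, E i)) T (Finset.mem_powerset.2 hTs)
    obtain ⟨i, hi⟩ := hTne
    have hU0 : μ (⋃ j ∈ T, E j) ≠ 0 :=
      (lt_of_lt_of_le (hpos i (hTs hi)) (measure_mono (subset_biUnion_of_mem hi))).ne'
    have hUt : μ (⋃ j ∈ T, E j) ≠ ⊤ := by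
      refine (lt_of_le_of_lt (measure_mono ?_) hshfin).ne
      exact iUnion₂_subset fun j hj => subset_biUnion_of_mem (hTs hj)
    exact (ENNReal.div_le_iff_le_mul (Or.inl hU0) (Or.inl hUt)).1 hle
  obtain ⟨f, hfinj, hfb⟩ := stmt17_greedy μ hmeas hpos hfin hη1 hM0 hMfin hCar0 hCarfin
    hmax hcar s.card s rfl (le_refl s)
  letI : LinearOrder ι := IsWellOrder.linearOrder WellOrderingRel
  set key : ι → ℕ ×ₗ ι := fun j => toLex (f j, j) with hkey
  have hfil : ∀ i ∈ s, s.filter (fun j => key i ≤ key j) = s.filter (fun j => f i ≤ f j) := by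
    intro i hi
    ext j
    simp only [Finset.mem_filter, and_congr_right_iff]
    intro hj
    rw [hkey]
    rw [Prod.Lex.le_iff]
    constructor
    · rintro (h | ⟨h, -⟩)
      · exact le_of_lt h
      · exact le_of_eq h
    · intro h
      rcases lt_or_eq_of_le h with h' | h'
      · exact Or.inl h'
      · exact Or.inr ⟨h', le_of_eq (hfinj (Finset.mem_coe.2 hi) (Finset.mem_coe.2 hj) h')⟩
  constructor
  · refine ⟨fun a b => key a ≤ key b, ?_, ?_⟩
    · exact
        { refl := fun a => le_refl _
          trans := fun a b c hab hbc => le_trans hab hbc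
          antisymm := fun a b hab hba => by
            have h1 : key a = key b := le_antisymm hab hba
            have h2 := congrArg (fun p => (ofLex p).2) h1
            simpa [hkey] using h2
          total := fun a b => le_total _ _ }
    · intro i hi
      have hgoal := hfb i hi
      rw [← hfil i hi] at hgoal
      convert hgoal using 5
      simp only [Finset.filter_congr_decidable]
  · set G : ι → Set X := fun i => {x | x ∈ E i ∧
      (∑ j ∈ s.filter (fun j => f i ≤ f j), (E j).indicator (1 : X → ℝ≥0∞) x)
        ≤ 2 * M * Car} with hGdef
    have hGsub : ∀ i, G i ⊆ E i := fun i x hx => hx.1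
    have hGmeas : ∀ i ∈ s, MeasurableSet (G i) := by
      intro i hi
      have h1 : MeasurableSet {x : X |
          (∑ j ∈ s.filter (fun j => f i ≤ f j), (E j).indicator (1 : X → ℝ≥0∞) x)
            ≤ 2 * M * Car} :=
        measurableSet_le (Finset.measurable_sum _ fun j hj =>
          measurable_const.indicator (hmeas j (Finset.mem_filter.1 hj).1)) measurable_const
      exact (hmeas i hi).inter h1
    refine ⟨fun i x => if i ∈ s then (G i).indicator (fun _ => (2 * M * Car)⁻¹) x else 0,
      ?_, ?_, ?_⟩
    · intro i hi
      simp only [if_pos hi]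
      exact measurable_const.indicator (hGmeas i hi)
    · intro i hi
      have hint : ∫⁻ x in E i,
          (if i ∈ s then (G i).indicator (fun _ => (2 * M * Car)⁻¹) x else 0) ∂μ
          = (2 * M * Car)⁻¹ * μ (G i) := by
        simp only [if_pos hi]
        rw [lintegral_indicator_const (hGmeas i hi), Measure.restrict_apply (hGmeas i hi),
          Set.inter_eq_left.2 (hGsub i)]
      rw [hint]
      calc ((1 - η) / (2 * M * Car)) * μ (E i)
          = (2 * M * Car)⁻¹ * ((1 - η) * μ (E i)) := by
            rw [div_eq_mul_inv]; ring
        _ ≤ (2 * M * Car)⁻¹ * μ (G i) := mul_le_mul_right (hfb i hi) _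
    · intro x
      have hφ : ∀ i ∈ s, (if i ∈ s then (G i).indicator (fun _ => (2 * M * Car)⁻¹) x else 0)
          = (2 * M * Car)⁻¹ * (G i).indicator (1 : X → ℝ≥0∞) x := by
        intro i hi
        simp only [if_pos hi, Set.indicator]
        split_ifs <;> simp
      rw [Finset.sum_congr rfl hφ, ← Finset.mul_sum]
      have hN : (∑ i ∈ s, (G i).indicator (1 : X → ℝ≥0∞) x) ≤ 2 * M * Car := by
        set A := s.filter (fun i => x ∈ G i) with hA
        rcases A.eq_empty_or_nonempty with hAe | hAne
        · have h0 : ∀ i ∈ s, (G i).indicator (1 : X → ℝ≥0∞) x = 0 := by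
            intro i hi
            have hx : x ∉ G i := fun hx =>
              (Finset.eq_empty_iff_forall_notMem.1 hAe i) (Finset.mem_filter.2 ⟨hi, hx⟩)
            simp [Set.indicator_of_notMem hx]
          rw [Finset.sum_congr rfl h0]
          simp
        · obtain ⟨i0, hi0A, hmin⟩ := Finset.exists_min_image A f hAne
          have hi0s : i0 ∈ s := (Finset.mem_filter.1 hi0A).1
          have hxG : x ∈ G i0 := (Finset.mem_filter.1 hi0A).2
          have hbound : (∑ j ∈ s.filter (fun j => f i0 ≤ f j),
              (E j).indicator (1 : X → ℝ≥0∞) x) ≤ 2 * M * Car := hxG.2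
          have h1 : (∑ i ∈ A, (G i).indicator (1 : X → ℝ≥0∞) x)
              = ∑ i ∈ s, (G i).indicator (1 : X → ℝ≥0∞) x := by
            refine Finset.sum_subset (Finset.filter_subset _ _) fun i hi hni => ?_
            have hx : x ∉ G i := fun hx => hni (Finset.mem_filter.2 ⟨hi, hx⟩)
            simp [Set.indicator_of_notMem hx]
          rw [← h1]
          have h2 : (∑ i ∈ A, (G i).indicator (1 : X → ℝ≥0∞) x)
              ≤ ∑ i ∈ A, (E i).indicator (1 : X → ℝ≥0∞) x := by
            refine Finset.sum_le_sum fun i hi => ?_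
            have hxG' : x ∈ G i := (Finset.mem_filter.1 hi).2
            rw [Set.indicator_of_mem hxG', Set.indicator_of_mem (hGsub i hxG')]
          have hAsub : A ⊆ s.filter (fun j => f i0 ≤ f j) := by
            intro i hi
            exact Finset.mem_filter.2 ⟨(Finset.mem_filter.1 hi).1, hmin i hi⟩
          exact le_trans h2 (le_trans (Finset.sum_le_sum_of_subset hAsub) hbound)
      calc (2 * M * Car)⁻¹ * ∑ i ∈ s, (G i).indicator (1 : X → ℝ≥0∞) x
          ≤ (2 * M * Car)⁻¹ * (2 * M * Car) := mul_le_mul_right hN _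
        _ = 1 := ENNReal.inv_mul_cancel hD0 hDfin.ne
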